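/- If p ∈ ℚ[x] is a monic irreducible polynomial such that −1 is a square in ℚ[x]/(p), then p factors in ℚ(i)[x] as a product p = g·h̄ where h̄ is the complex conjugate of g; consequently, writing g = a + b·i with a, b ∈ ℚ[x], one has p = a² + b². -/

import Mathlib

open Polynomial

noncomputable section QiAux

private lemma qi_irr : Irreducible (X^2 + 1 : ℚ[X]) := by
  have h1 : (X^2 + 1 : ℚ[X]) = X^2 + C 1 := by rw [C_1]
  have hdeg : (X^2 + 1 : ℚ[X]).natDegree = 2 := by
    rw [h1, natDegree_X_pow_add_C]
  rw [irreducible_iff_roots_eq_zero_of_degree_le_three (by omega) (by omega)]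
  rw [Multiset.eq_zero_iff_forall_notMem]
  intro x hx
  have h0 : (X^2 + 1 : ℚ[X]) ≠ 0 := by
    intro h; rw [h] at hdeg; simp at hdeg
  rw [mem_roots h0] at hx
  have := hx
  simp only [IsRoot, eval_add, eval_pow, eval_X, eval_one] at this
  nlinarith [sq_nonneg x]

instance : Fact (Irreducible (X^2 + 1 : ℚ[X])) := ⟨qi_irr⟩

abbrev Kq : Type := AdjoinRoot (X^2 + 1 : ℚ[X])

private lemma qi_monic : (X^2 + 1 : ℚ[X]).Monic := by
  have h1 : (X^2 + 1 : ℚ[X]) = X^2 + C 1 := by rw [C_1]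
  rw [h1]; exact monic_X_pow_add_C _ (by norm_num)

private lemma qi_degree : (X^2 + 1 : ℚ[X]).degree = 2 := by
  have h1 : (X^2 + 1 : ℚ[X]) = X^2 + C 1 := by rw [C_1]
  rw [h1]; exact_mod_cast degree_X_pow_add_C (by norm_num) 1

namespace QiK

def r : Kq := AdjoinRoot.root _

def φ : ℚ →+* Kq := algebraMap ℚ Kq

lemma r_sq : r ^ 2 = -1 := by
  have h := AdjoinRoot.mk_self (f := (X^2 + 1 : ℚ[X]))
  simp only [map_add, map_pow, map_one, AdjoinRoot.mk_X] at h
  have : (AdjoinRoot.root (X^2+1 : ℚ[X]))^2 = -1 := by linear_combination h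
  exact this

def re (z : Kq) : ℚ := (AdjoinRoot.modByMonicHom qi_monic z).coeff 0
def im (z : Kq) : ℚ := (AdjoinRoot.modByMonicHom qi_monic z).coeff 1

lemma re_im_spec (z : Kq) : z = φ (re z) + φ (im z) * r := by
  obtain ⟨f, rfl⟩ := AdjoinRoot.mk_surjective z
  have hw : AdjoinRoot.modByMonicHom qi_monic (AdjoinRoot.mk _ f) = f %ₘ (X^2+1) :=
    AdjoinRoot.modByMonicHom_mk qi_monic f
  have hdeg : (f %ₘ (X^2+1)).degree ≤ 1 := by
    have := degree_modByMonic_lt f qi_monic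
    rw [qi_degree] at this
    exact Order.le_of_lt_succ (by exact_mod_cast this)
  have hz : AdjoinRoot.mk _ f = AdjoinRoot.mk (X^2+1 : ℚ[X]) (f %ₘ (X^2+1)) := by
    conv_lhs => rw [← AdjoinRoot.mk_leftInverse qi_monic (AdjoinRoot.mk _ f)]
    rw [hw]
  rw [re, im, hw, hz]
  conv_lhs => rw [eq_X_add_C_of_degree_le_one hdeg]
  simp only [map_add, map_mul, AdjoinRoot.mk_C, AdjoinRoot.mk_X]
  show _ = AdjoinRoot.of _ _ + AdjoinRoot.of _ _ * AdjoinRoot.root _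
  ring

lemma rep_eq_zero {x y : ℚ} (h : φ x + φ y * r = 0) : x = 0 ∧ y = 0 := by
  have hmk : φ x + φ y * r = AdjoinRoot.mk (X^2+1 : ℚ[X]) (C y * X + C x) := by
    simp only [map_add, map_mul, AdjoinRoot.mk_C, AdjoinRoot.mk_X]
    show AdjoinRoot.of _ _ + AdjoinRoot.of _ _ * AdjoinRoot.root _ = _
    ring
  rw [hmk] at h
  have h2 : AdjoinRoot.modByMonicHom qi_monic (AdjoinRoot.mk (X^2+1 : ℚ[X]) (C y * X + C x)) = (C y * X + C x) %ₘ (X^2+1) :=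
    AdjoinRoot.modByMonicHom_mk qi_monic _
  rw [h, map_zero] at h2
  have hlt : (C y * X + C x : ℚ[X]).degree < (X^2+1 : ℚ[X]).degree := by
    rw [qi_degree]
    exact lt_of_le_of_lt (degree_linear_le) (by norm_num)
  rw [(modByMonic_eq_self_iff qi_monic).mpr hlt] at h2
  constructor
  · have := congrArg (fun p => Polynomial.coeff p 0) h2
    simpa using this.symm
  · have := congrArg (fun p => Polynomial.coeff p 1) h2
    simpa using this.symm

def σ : Kq →ₐ[ℚ] Kq :=
  AdjoinRoot.liftAlgHom _ (Algebra.ofId ℚ Kq) (-r) (by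
    have h : (X^2 + 1 : ℚ[X]).eval₂ ((Algebra.ofId ℚ Kq) : ℚ →+* Kq) (-r) = (-r)^2 + 1 := by simp
    rw [h, neg_sq, r_sq]; ring)

lemma σ_root : σ r = -r := AdjoinRoot.liftAlgHom_root ..

lemma σ_phi (x : ℚ) : σ (φ x) = φ x := σ.commutes x

lemma σ_rep (x y : ℚ) : σ (φ x + φ y * r) = φ x - φ y * r := by
  rw [map_add, map_mul, σ_root, σ_phi, σ_phi]; ring

lemma σ_σ (z : Kq) : σ (σ z) = z := by
  rw [re_im_spec z, σ_rep, map_sub, map_mul, σ_root, σ_phi, σ_phi]; ring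

lemma exists_of_fixed {z : Kq} (h : σ z = z) : ∃ x : ℚ, φ x = z := by
  have hz := re_im_spec z
  rw [hz, σ_rep] at h
  have h2 : φ 0 + φ (2 * im z) * r = 0 := by
    rw [map_zero, map_mul]
    have : (2 : Kq) * (φ (im z) * r) = 0 := by linear_combination -h
    push_cast [map_ofNat]
    calc (0:Kq) + φ 2 * φ (im z) * r = 2 * (φ (im z) * r) := by
          rw [map_ofNat]; ring
      _ = 0 := this
  have := (rep_eq_zero h2).2
  have him : im z = 0 := by linarith
  refine ⟨re z, ?_⟩
  conv_rhs => rw [hz]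
  rw [him, map_zero, zero_mul, add_zero]

lemma re_zero : re 0 = 0 := by simp [re]
lemma im_zero : im 0 = 0 := by simp [im]

def reP (G : Polynomial Kq) : ℚ[X] := G.sum fun k z => C (re z) * X^k
def imP (G : Polynomial Kq) : ℚ[X] := G.sum fun k z => C (im z) * X^k

lemma coeff_reP (G : Polynomial Kq) (k : ℕ) : (reP G).coeff k = re (G.coeff k) := by
  classical
  rw [reP, Polynomial.sum, finset_sum_coeff]
  simp only [coeff_C_mul, coeff_X_pow, mul_ite, mul_one, mul_zero]
  rw [Finset.sum_ite_eq G.support k (fun n => re (G.coeff n))]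
  split_ifs with h
  · rfl
  · rw [notMem_support_iff.mp h, re_zero]

lemma coeff_imP (G : Polynomial Kq) (k : ℕ) : (imP G).coeff k = im (G.coeff k) := by
  classical
  rw [imP, Polynomial.sum, finset_sum_coeff]
  simp only [coeff_C_mul, coeff_X_pow, mul_ite, mul_one, mul_zero]
  rw [Finset.sum_ite_eq G.support k (fun n => im (G.coeff n))]
  split_ifs with h
  · rfl
  · rw [notMem_support_iff.mp h, im_zero]

lemma decomp (G : Polynomial Kq) :
    (reP G).map φ + C r * (imP G).map φ = G := by
  ext k
  rw [coeff_add, coeff_C_mul, coeff_map, coeff_map, coeff_reP, coeff_imP]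
  conv_rhs => rw [re_im_spec (G.coeff k)]
  ring

lemma map_phi_map_σ (a : ℚ[X]) : (a.map φ).map (σ : Kq →+* Kq) = a.map φ := by
  rw [Polynomial.map_map]
  congr 1
  exact RingHom.ext σ_phi

lemma map_σ_map_σ (G : Polynomial Kq) : (G.map (σ : Kq →+* Kq)).map (σ : Kq →+* Kq) = G := by
  rw [Polynomial.map_map]
  have : (σ : Kq →+* Kq).comp (σ : Kq →+* Kq) = RingHom.id Kq := RingHom.ext σ_σ
  rw [this, Polynomial.map_id]

end QiK
end QiAux

open QiK in
theorem irreducible_factors_over_Qi (p : Polynomial ℚ) (hm : p.Monic)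
    (hirr : Irreducible p) (hsq : ∃ u : AdjoinRoot p, u ^ 2 = -1) :
    ∃ a b : Polynomial ℚ,
      p.map (algebraMap ℚ ℂ) =
        (a.map (algebraMap ℚ ℂ) + Polynomial.C Complex.I * b.map (algebraMap ℚ ℂ)) *
        (a.map (algebraMap ℚ ℂ) - Polynomial.C Complex.I * b.map (algebraMap ℚ ℂ)) ∧
      p = a ^ 2 + b ^ 2 := by
  classical
  obtain ⟨u, hu⟩ := hsq
  obtain ⟨q0, rfl⟩ := AdjoinRoot.mk_surjective u
  set q : ℚ[X] := q0 %ₘ p with hqdef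
  have hdvdq : p ∣ q ^ 2 + 1 := by
    have hmk : AdjoinRoot.mk p q = AdjoinRoot.mk p q0 := by
      conv_rhs => rw [← AdjoinRoot.mk_leftInverse hm (AdjoinRoot.mk p q0)]
      rw [AdjoinRoot.modByMonicHom_mk]
    rw [← AdjoinRoot.mk_eq_zero, map_add, map_pow, map_one, hmk, hu]; ring
  have hdegq : q.degree < p.degree := degree_modByMonic_lt q0 hm
  have hφinj : Function.Injective φ := φ.injective
  set P : Polynomial Kq := p.map φ with hPdef
  set Q : Polynomial Kq := q.map φ with hQdef
  have hPmonic : P.Monic := hm.map φ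
  have hPne : P ≠ 0 := hPmonic.ne_zero
  have hdegP : P.degree = p.degree := degree_map_eq_of_injective hφinj p
  have hdegppos : 0 < p.degree := degree_pos_of_irreducible hirr
  have hCr2 : (C r : Polynomial Kq) ^ 2 = -1 := by
    rw [← map_pow, r_sq, map_neg, map_one]
  have hPdvd : P ∣ (Q + C r) * (Q - C r) := by
    have hprod : (Q + C r) * (Q - C r) = (q ^ 2 + 1).map φ := by
      rw [Polynomial.map_add, Polynomial.map_pow, Polynomial.map_one]
      have h2 : (Q + C r) * (Q - C r) = Q ^ 2 - (C r) ^ 2 := by ring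
      rw [h2, hCr2]; ring
    rw [hprod]
    obtain ⟨c, hc⟩ := hdvdq
    exact ⟨c.map φ, by rw [hc, Polynomial.map_mul]⟩
  have hdegQ : ∀ e : Kq, (Q + C e).degree < P.degree := by
    intro e
    refine lt_of_le_of_lt (degree_add_le _ _) (max_lt ?_ ?_)
    · rw [hdegP, hQdef]
      exact lt_of_le_of_lt Polynomial.degree_map_le hdegq
    · exact lt_of_le_of_lt degree_C_le (by rw [hdegP]; exact hdegppos)
  have hndvd1 : ¬ P ∣ (Q + C r) := by
    intro hdd
    rcases eq_or_ne (Q + C r) 0 with h0 | h0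
    · have hco : φ (q.coeff 0) + r = 0 := by
        have := congrArg (fun s => Polynomial.coeff s 0) h0
        simpa [hQdef, coeff_map] using this
      have h2 : φ (q.coeff 0) + φ 1 * r = 0 := by rw [map_one, one_mul]; exact hco
      exact one_ne_zero ((rep_eq_zero h2).2)
    · exact absurd (degree_le_of_dvd hdd h0) (not_le.mpr (hdegQ r))
  have hndvd2 : ¬ P ∣ (Q - C r) := by
    intro hdd
    rcases eq_or_ne (Q - C r) 0 with h0 | h0
    · have hco : φ (q.coeff 0) - r = 0 := by
        have := congrArg (fun s => Polynomial.coeff s 0) h0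
        simpa [hQdef, coeff_map] using this
      have h2 : φ (-(q.coeff 0)) + φ 1 * r = 0 := by
        rw [map_one, one_mul, map_neg]
        linear_combination -hco
      exact one_ne_zero ((rep_eq_zero h2).2)
    · have hdd' : (Q - C r).degree < P.degree := by
        have he : Q - C r = Q + C (-r) := by rw [map_neg]; ring
        rw [he]; exact hdegQ (-r)
      exact absurd (degree_le_of_dvd hdd h0) (not_le.mpr hdd')
  have hnotprime : ¬ Prime P := fun hp => (hp.2.2 _ _ hPdvd).elim hndvd1 hndvd2
  have hnotunit : ¬ IsUnit P := by
    intro hun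
    have hd := degree_eq_zero_of_isUnit hun
    rw [hdegP] at hd
    exact absurd hd (by simpa using hdegppos.ne')
  have hexists : ∃ g h : Polynomial Kq, P = g * h ∧ ¬IsUnit g ∧ ¬IsUnit h := by
    by_contra hcon
    push_neg at hcon
    refine hnotprime (Irreducible.prime ⟨hnotunit, fun a b hab => ?_⟩)
    by_cases ha : IsUnit a
    · exact Or.inl ha
    · exact Or.inr (hcon a b hab ha)
  obtain ⟨g, h, hgh, hgu, hhu⟩ := hexists
  have hσinj : Function.Injective (σ : Kq →+* Kq) := (σ : Kq →+* Kq).injective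
  obtain ⟨gs, hgsdef⟩ : ∃ gs, gs = g.map (σ : Kq →+* Kq) := ⟨_, rfl⟩
  have hgne : g ≠ 0 := fun h0 => hPne (by rw [hgh, h0, zero_mul])
  have hhne : h ≠ 0 := fun h0 => hPne (by rw [hgh, h0, mul_zero])
  have hgsne : gs ≠ 0 := by
    rw [hgsdef]
    intro h0
    exact hgne ((Polynomial.map_eq_zero_iff hσinj).mp h0)
  have hPσ : P.map (σ : Kq →+* Kq) = P := map_phi_map_σ p
  have hgsdvd : gs ∣ P := ⟨h.map (σ : Kq →+* Kq), by rw [← hPσ, hgh, Polynomial.map_mul, hgsdef]⟩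
  have hNdvd : g * gs ∣ P * P := mul_dvd_mul ⟨h, hgh⟩ hgsdvd
  have hNσ : (g * gs).map (σ : Kq →+* Kq) = g * gs := by
    rw [hgsdef, Polynomial.map_mul, map_σ_map_σ g]
    exact mul_comm _ _
  have hlift : (g * gs) ∈ Polynomial.lifts (φ : ℚ →+* Kq) := by
    rw [Polynomial.lifts_iff_coeff_lifts]
    intro n
    have hc := congrArg (fun s => Polynomial.coeff s n) hNσ
    simp only [Polynomial.coeff_map] at hc
    exact exists_of_fixed hc
  obtain ⟨n0, hn0⟩ := (Polynomial.mem_lifts _).mp hlift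
  have hn0dvd : n0 ∣ p * p := by
    rw [← Polynomial.map_dvd_map' (φ : ℚ →+* Kq), Polynomial.map_mul, hn0]
    exact hNdvd
  have hdeg_pos_of : ∀ gg : Polynomial Kq, gg ≠ 0 → ¬ IsUnit gg → 0 < gg.natDegree := by
    intro gg hne hnu
    rcases Nat.eq_zero_or_pos gg.natDegree with h0 | h0
    · exfalso
      have hgC : gg = C (gg.coeff 0) := eq_C_of_natDegree_eq_zero h0
      have hc0 : gg.coeff 0 ≠ 0 := fun hc => hne (by rw [hgC, hc, map_zero])
      exact hnu (hgC ▸ isUnit_C.mpr (isUnit_iff_ne_zero.mpr hc0))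
    · exact h0
  have hgnd : 0 < g.natDegree := hdeg_pos_of g hgne hgu
  have hhnd : 0 < h.natDegree := hdeg_pos_of h hhne hhu
  have hgsnd : gs.natDegree = g.natDegree := by
    rw [hgsdef]; exact natDegree_map_eq_of_injective hσinj g
  have hPnd : P.natDegree = p.natDegree := natDegree_map_eq_of_injective hφinj p
  have hsplit : p.natDegree = g.natDegree + h.natDegree := by
    rw [← hPnd, hgh, natDegree_mul hgne hhne]
  have hn0nd : n0.natDegree = 2 * g.natDegree := by
    have h2 := natDegree_map_eq_of_injective hφinj n0
    rw [hn0, natDegree_mul hgne hgsne, hgsnd] at h2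
    omega
  have hn0nu : ¬ IsUnit n0 := by
    intro hun
    have := natDegree_eq_zero_of_isUnit hun
    omega
  have hassoc : ∃ t : ℚ[X], IsUnit t ∧ n0 = p * t := by
    obtain ⟨m, hmeq⟩ := hn0dvd
    have hpprime : Prime p := hirr.prime
    have hpdvd : p ∣ n0 * m := ⟨p, hmeq.symm⟩
    rcases hpprime.2.2 _ _ hpdvd with hp1 | hp2
    · obtain ⟨t, ht⟩ := hp1
      have hcancel : p = t * m := by
        have h2 : p * p = p * (t * m) := by rw [hmeq, ht]; ring
        exact mul_left_cancel₀ hm.ne_zero h2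
      rcases hirr.isUnit_or_isUnit hcancel with hut | hum
      · exact ⟨t, hut, ht⟩
      · exfalso
        have hmnd : m.natDegree = 0 := natDegree_eq_zero_of_isUnit hum
        have hmne : m ≠ 0 := by
          intro h0; rw [h0, mul_zero] at hmeq
          exact hm.ne_zero (mul_self_eq_zero.mp hmeq)
        have hn0ne : n0 ≠ 0 := by
          intro h0; rw [h0, zero_mul] at hmeq
          exact hm.ne_zero (mul_self_eq_zero.mp hmeq)
        have h3 := congrArg natDegree hmeq
        rw [natDegree_mul hm.ne_zero hm.ne_zero, natDegree_mul hn0ne hmne, hmnd] at h3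
        omega
    · obtain ⟨s, hs⟩ := hp2
      have hcancel : p = n0 * s := by
        have h2 : p * p = p * (n0 * s) := by rw [hmeq, hs]; ring
        exact mul_left_cancel₀ hm.ne_zero h2
      rcases hirr.isUnit_or_isUnit hcancel with hun | hus
      · exact absurd hun hn0nu
      · obtain ⟨s', hs'⟩ := hus.exists_right_inv
        refine ⟨s', IsUnit.of_mul_eq_one s (by rw [mul_comm]; exact hs'), ?_⟩
        calc n0 = n0 * (s * s') := by rw [hs', mul_one]
          _ = (n0 * s) * s' := by ring
          _ = p * s' := by rw [← hcancel]
  obtain ⟨t, htu, hnt⟩ := hassoc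
  obtain ⟨c, hcu, hCc⟩ := Polynomial.isUnit_iff.mp htu
  have hcne : c ≠ 0 := hcu.ne_zero
  have hmapeq : g * gs = P * C (φ c) := by
    rw [← hn0, hnt, Polynomial.map_mul, ← hCc, map_C]
  have hφcne : (φ c : Kq) ≠ 0 := fun h0 => hcne (hφinj (by rw [h0, map_zero]))
  have hlc : g.leadingCoeff * σ g.leadingCoeff = φ c := by
    have h1 := congrArg leadingCoeff hmapeq
    rw [leadingCoeff_mul, leadingCoeff_mul, hPmonic.leadingCoeff, one_mul, leadingCoeff_C,
      hgsdef, leadingCoeff_map_of_injective hσinj g] at h1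
    exact h1
  have hdne : g.leadingCoeff ≠ 0 := leadingCoeff_ne_zero.mpr hgne
  obtain ⟨g', hg'⟩ : ∃ g', g' = C (g.leadingCoeff)⁻¹ * g := ⟨_, rfl⟩
  have hg's : g'.map (σ : Kq →+* Kq) = C (σ g.leadingCoeff)⁻¹ * gs := by
    rw [hg', Polynomial.map_mul, map_C, map_inv₀, hgsdef]
    rfl
  have hkey : g' * g'.map (σ : Kq →+* Kq) = P := by
    rw [hg's, hg']
    have h1 : C (g.leadingCoeff)⁻¹ * g * (C (σ g.leadingCoeff)⁻¹ * gs)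
        = C (g.leadingCoeff)⁻¹ * C (σ g.leadingCoeff)⁻¹ * (g * gs) := by ring
    rw [h1, hmapeq, ← map_mul, ← mul_inv, hlc]
    have h2 : (C (φ c)⁻¹ : Polynomial Kq) * (P * C (φ c)) = (C (φ c)⁻¹ * C (φ c)) * P := by ring
    rw [h2, ← map_mul, inv_mul_cancel₀ hφcne, map_one, one_mul]
  set A : Polynomial Kq := (reP g').map φ with hA
  set B : Polynomial Kq := (imP g').map φ with hB
  have hdec : A + C r * B = g' := decomp g'
  have hAσ : A.map (σ : Kq →+* Kq) = A := by rw [hA]; exact map_phi_map_σ _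
  have hBσ : B.map (σ : Kq →+* Kq) = B := by rw [hB]; exact map_phi_map_σ _
  have hdecσ : g'.map (σ : Kq →+* Kq) = A - C r * B := by
    conv_lhs => rw [← hdec]
    rw [Polynomial.map_add, Polynomial.map_mul, map_C, hAσ, hBσ]
    show A + C (σ r) * B = A - C r * B
    rw [σ_root, map_neg]
    ring
  have hfinal : p.map φ = ((reP g') ^ 2 + (imP g') ^ 2).map φ := by
    have hPeq : P = A ^ 2 + B ^ 2 := by
      rw [← hkey, hdecσ, ← hdec]
      have h1 : (A + C r * B) * (A - C r * B) = A ^ 2 - (C r) ^ 2 * B ^ 2 := by ring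
      rw [h1, hCr2]; ring
    rw [Polynomial.map_add, Polynomial.map_pow, Polynomial.map_pow, ← hA, ← hB, ← hPdef]
    exact hPeq
  have hpab : p = (reP g') ^ 2 + (imP g') ^ 2 := Polynomial.map_injective φ hφinj hfinal
  refine ⟨reP g', imP g', ?_, hpab⟩
  rw [hpab, Polynomial.map_add, Polynomial.map_pow, Polynomial.map_pow]
  have hI : (C Complex.I : Polynomial ℂ) ^ 2 = -1 := by
    rw [← map_pow, Complex.I_sq, map_neg, map_one]
  have h2 : ((reP g').map (algebraMap ℚ ℂ) + C Complex.I * (imP g').map (algebraMap ℚ ℂ)) *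
        ((reP g').map (algebraMap ℚ ℂ) - C Complex.I * (imP g').map (algebraMap ℚ ℂ))
      = ((reP g').map (algebraMap ℚ ℂ)) ^ 2 - (C Complex.I) ^ 2 * ((imP g').map (algebraMap ℚ ℂ)) ^ 2 := by
    ring
  rw [h2, hI]; ring
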